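/- Every double coset HuH in S_{2n}, where H is the subgroup preserving each pair {2i-1,2i}, contains exactly one element v satisfying v(2i) > v(2i-1) and v⁻¹(2i) > v⁻¹(2i-1) for all i = 1,...,n. -/

import Mathlib

/-- The equivalence `Fin n × Fin 2 ≃ Fin (2*n)`, `(a, b) ↦ 2a + b`. -/
def pairFinEquiv (n : ℕ) : Fin n × Fin 2 ≃ Fin (2 * n) where
  toFun p := ⟨2 * p.1.1 + p.2.1, by have h1 := p.1.2; have h2 := p.2.2; omega⟩
  invFun i := (⟨i.1 / 2, by have := i.2; omega⟩, ⟨i.1 % 2, by omega⟩)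
  left_inv := by
    rintro ⟨⟨a, ha⟩, ⟨b, hb⟩⟩
    simp only [Prod.mk.injEq]
    constructor <;> apply Fin.ext <;> simp <;> omega
  right_inv := by
    rintro ⟨i, hi⟩
    apply Fin.ext
    simp
    omega

/-- The doubling map `w ↦ w̃`, sending a permutation of `{0, …, n-1}` to the permutation of
`{0, …, 2n-1}` with `w̃(2i) = 2w(i)` and `w̃(2i+1) = 2w(i)+1` (the zero-based version of
`w̃(2i) = 2w(i)`, `w̃(2i-1) = 2w(i)-1`). -/
def double {n : ℕ} (w : Equiv.Perm (Fin n)) : Equiv.Perm (Fin (2 * n)) :=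
  (pairFinEquiv n).permCongr (Equiv.prodCongr w (Equiv.refl (Fin 2)))

/-- The number of inversions of a permutation, i.e. its Coxeter length. -/
noncomputable def invLength {n : ℕ} (u : Equiv.Perm (Fin n)) : ℕ :=
  Set.ncard { p : Fin n × Fin n | p.1 < p.2 ∧ u p.2 < u p.1 }

/-- Bruhat order on the symmetric group: the reflexive-transitive closure of the relation
`a → a * t` where `t` is a transposition and `ℓ(a * t) > ℓ(a)`. -/
def BruhatLE {n : ℕ} (x w : Equiv.Perm (Fin n)) : Prop :=
  Relation.ReflTransGen
    (fun a b => (∃ i j : Fin n, b = a * Equiv.swap i j) ∧ invLength a < invLength b) x w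

/-- The subgroup `H` of `S_{2n}` of permutations preserving each pair `{2i, 2i+1}`. -/
def pairSubgroup (n : ℕ) : Subgroup (Equiv.Perm (Fin (2 * n))) where
  carrier := { u | ∀ i, (u i).1 / 2 = i.1 / 2 }
  one_mem' := by intro i; rfl
  mul_mem' := by
    intro a b ha hb i
    rw [Equiv.Perm.mul_apply, ha, hb]
  inv_mem' := by
    intro a ha i
    have h := ha (a⁻¹ i)
    rw [show a (a⁻¹ i) = i by simp] at h
    omega

/-- The subgroup `K` of `S_{2n}` of parity-preserving permutations. -/
def paritySubgroup (n : ℕ) : Subgroup (Equiv.Perm (Fin (2 * n))) where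
  carrier := { u | ∀ i, (u i).1 % 2 = i.1 % 2 }
  one_mem' := by intro i; rfl
  mul_mem' := by
    intro a b ha hb i
    rw [Equiv.Perm.mul_apply, ha, hb]
  inv_mem' := by
    intro a ha i
    have h := ha (a⁻¹ i)
    rw [show a (a⁻¹ i) = i by simp] at h
    omega

/-- A permutation of `{0,…,2n-1}` is bi-`H`-reduced if it is increasing on each pair
`{2i, 2i+1}` and so is its inverse. -/
def BiReduced {n : ℕ} (v : Equiv.Perm (Fin (2 * n))) : Prop :=
  ∀ i : Fin n,
    v ⟨2 * i.1, by have := i.2; omega⟩ < v ⟨2 * i.1 + 1, by have := i.2; omega⟩ ∧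
    v⁻¹ ⟨2 * i.1, by have := i.2; omega⟩ < v⁻¹ ⟨2 * i.1 + 1, by have := i.2; omega⟩

/-- Membership of `v` in the double coset `H x H` of `H = pairSubgroup n`. -/
def InPairDoubleCoset {n : ℕ} (x v : Equiv.Perm (Fin (2 * n))) : Prop :=
  ∃ h₁ ∈ pairSubgroup n, ∃ h₂ ∈ pairSubgroup n, v = h₁ * x * h₂

/-- The matrix attached to a double coset `HuH`: the `(i,j)` entry is
`#({2i, 2i+1} ∩ u({2j, 2j+1}))`. -/
noncomputable def cosetMatrix {n : ℕ} (u : Equiv.Perm (Fin (2 * n))) :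
    Matrix (Fin n) (Fin n) ℕ :=
  fun i j => Set.ncard { k : Fin (2 * n) | k.1 / 2 = j.1 ∧ (u k).1 / 2 = i.1 }

/-- The simple reflection `s_j = (j, j+1)` of `S_n` (zero-based). -/
def sRefl {n : ℕ} (j : {j : ℕ // j + 1 < n}) : Equiv.Perm (Fin n) :=
  Equiv.swap ⟨j.1, Nat.lt_of_succ_lt j.2⟩ ⟨j.1 + 1, j.2⟩

/-- A Boolean permutation: a product of distinct simple reflections. -/
def BooleanPerm {n : ℕ} (w : Equiv.Perm (Fin n)) : Prop :=
  ∃ js : List {j : ℕ // j + 1 < n}, (js.map Subtype.val).Nodup ∧ w = (js.map sRefl).prod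

/-- `w` avoids the pattern `(321)`. -/
def Avoids321 {n : ℕ} (w : Equiv.Perm (Fin n)) : Prop :=
  ¬ ∃ i j k : Fin n, i < j ∧ j < k ∧ w k < w j ∧ w j < w i

/-- `w` avoids the pattern `(3412)`. -/
def Avoids3412 {n : ℕ} (w : Equiv.Perm (Fin n)) : Prop :=
  ¬ ∃ i j k l : Fin n, i < j ∧ j < k ∧ k < l ∧ w k < w l ∧ w l < w i ∧ w i < w j

/-- `w` avoids the pattern `(4231)`. -/
def Avoids4231 {n : ℕ} (w : Equiv.Perm (Fin n)) : Prop :=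
  ¬ ∃ i j k l : Fin n, i < j ∧ j < k ∧ k < l ∧ w l < w j ∧ w j < w k ∧ w k < w i


namespace Stmt6Aux

variable {n : ℕ}

def eIdx (i : Fin n) : Fin (2 * n) := ⟨2 * i.1, by have := i.2; omega⟩
def oIdx (i : Fin n) : Fin (2 * n) := ⟨2 * i.1 + 1, by have := i.2; omega⟩

def condFlipFun (c : ℕ → Bool) (k : Fin (2 * n)) : Fin (2 * n) :=
  if c (k.1 / 2) then ⟨2 * (k.1 / 2) + (1 - k.1 % 2), by have := k.2; omega⟩ else k

lemma condFlipFun_val (c : ℕ → Bool) (k : Fin (2 * n)) :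
    (condFlipFun c k).1 = if c (k.1 / 2) then 2 * (k.1 / 2) + (1 - k.1 % 2) else k.1 := by
  unfold condFlipFun; split <;> rfl

lemma condFlipFun_half (c : ℕ → Bool) (k : Fin (2 * n)) :
    (condFlipFun c k).1 / 2 = k.1 / 2 := by
  rw [condFlipFun_val]; split <;> omega

lemma condFlipFun_invol (c : ℕ → Bool) :
    Function.Involutive (condFlipFun c : Fin (2 * n) → Fin (2 * n)) := by
  intro k
  apply Fin.ext
  rw [condFlipFun_val, condFlipFun_half, condFlipFun_val]
  have := k.2
  split_ifs <;> omega

def condFlip (c : ℕ → Bool) : Equiv.Perm (Fin (2 * n)) :=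
  (condFlipFun_invol c).toPerm

lemma condFlip_apply (c : ℕ → Bool) (k : Fin (2 * n)) : condFlip c k = condFlipFun c k := rfl

lemma condFlip_inv (c : ℕ → Bool) : (condFlip c : Equiv.Perm (Fin (2 * n)))⁻¹ = condFlip c := rfl

lemma condFlip_mem (c : ℕ → Bool) : (condFlip c : Equiv.Perm (Fin (2 * n))) ∈ pairSubgroup n := by
  intro k; exact condFlipFun_half c k

lemma condFlip_apply_e (c : ℕ → Bool) (i : Fin n) :
    condFlip c (eIdx i) = if c i.1 then oIdx i else eIdx i := by
  apply Fin.ext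
  rw [condFlip_apply, condFlipFun_val]
  have h1 : (eIdx i).1 = 2 * i.1 := rfl
  rw [h1]
  have h2 : 2 * i.1 / 2 = i.1 := by omega
  rw [h2]
  split_ifs <;> [show _ = (oIdx i).1; show _ = (eIdx i).1] <;> simp [eIdx, oIdx] <;> omega

lemma condFlip_apply_o (c : ℕ → Bool) (i : Fin n) :
    condFlip c (oIdx i) = if c i.1 then eIdx i else oIdx i := by
  apply Fin.ext
  rw [condFlip_apply, condFlipFun_val]
  have h1 : (oIdx i).1 = 2 * i.1 + 1 := rfl
  rw [h1]
  have h2 : (2 * i.1 + 1) / 2 = i.1 := by omega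
  rw [h2]
  split_ifs <;> [show _ = (eIdx i).1; show _ = (oIdx i).1] <;> simp [eIdx, oIdx] <;> omega

end Stmt6Aux

namespace Stmt6Aux

variable {n : ℕ}

lemma eIdx_lt_oIdx (i : Fin n) : eIdx i < oIdx i := by
  simp [eIdx, oIdx, Fin.lt_def]

lemma eq_eIdx_or_oIdx (k : Fin (2 * n)) :
    ∃ i : Fin n, k = eIdx i ∨ k = oIdx i := by
  refine ⟨⟨k.1 / 2, by have := k.2; omega⟩, ?_⟩
  have h2 := k.2
  rcases Nat.even_or_odd k.1 with ⟨m, hm⟩ | ⟨m, hm⟩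
  · left; apply Fin.ext; show k.1 = 2 * (k.1 / 2); omega
  · right; apply Fin.ext; show k.1 = 2 * (k.1 / 2) + 1; omega

lemma halves_cases {a b : Fin (2 * n)} (j : Fin n) (hab : a ≠ b)
    (ha : a.1 / 2 = j.1) (hb : b.1 / 2 = j.1) :
    (a = eIdx j ∧ b = oIdx j) ∨ (a = oIdx j ∧ b = eIdx j) := by
  have hne : a.1 ≠ b.1 := fun h => hab (Fin.ext h)
  have h2a := a.2; have h2b := b.2
  rcases Nat.lt_or_ge a.1 b.1 with h | h <;> [left; right] <;>
    constructor <;> apply Fin.ext <;> simp [eIdx, oIdx] <;> omega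

lemma exists_biReduced (u : Equiv.Perm (Fin (2 * n))) :
    ∃ v, InPairDoubleCoset u v ∧ BiReduced v := by
  classical
  set c2 : ℕ → Bool := fun i =>
    if h : i < n then decide ((u (oIdx ⟨i, h⟩)).1 / 2 < (u (eIdx ⟨i, h⟩)).1 / 2)
    else false with hc2
  set u' : Equiv.Perm (Fin (2 * n)) := u * condFlip c2 with hu'
  set c1 : ℕ → Bool := fun j =>
    if h : j < n then decide ((u'⁻¹ (oIdx ⟨j, h⟩)).1 < (u'⁻¹ (eIdx ⟨j, h⟩)).1)
    else false with hc1
  have hc2v : ∀ i : Fin n, c2 i.1 = decide ((u (oIdx i)).1 / 2 < (u (eIdx i)).1 / 2) := by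
    intro i; rw [hc2]; simp only [i.2, dif_pos, Fin.eta]
  have hc1v : ∀ j : Fin n, c1 j.1 = decide ((u'⁻¹ (oIdx j)).1 < (u'⁻¹ (eIdx j)).1) := by
    intro j; rw [hc1]; simp only [j.2, dif_pos, Fin.eta]
  -- u' is half-sorted on domain pairs
  have hq : ∀ i : Fin n, (u' (eIdx i)).1 / 2 ≤ (u' (oIdx i)).1 / 2 := by
    intro i
    have he : u' (eIdx i) = u (condFlip c2 (eIdx i)) := rfl
    have ho : u' (oIdx i) = u (condFlip c2 (oIdx i)) := rfl
    rw [he, ho, condFlip_apply_e, condFlip_apply_o, hc2v]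
    by_cases h : (u (oIdx i)).1 / 2 < (u (eIdx i)).1 / 2
    · simp [h]; omega
    · simp [h]; omega
  refine ⟨condFlip c1 * u', ⟨condFlip c1, condFlip_mem c1, condFlip c2, condFlip_mem c2,
    by rw [hu', mul_assoc]⟩, ?_⟩
  intro i
  constructor
  · -- forward condition
    show condFlip c1 (u' (eIdx i)) < condFlip c1 (u' (oIdx i))
    have hne : u' (eIdx i) ≠ u' (oIdx i) := by
      intro h
      have := u'.injective h
      have : (eIdx i).1 = (oIdx i).1 := congrArg Fin.val this
      simp [eIdx, oIdx] at this
    rcases Nat.lt_or_ge ((u' (eIdx i)).1 / 2) ((u' (oIdx i)).1 / 2) with h | h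
    · have h1 := condFlipFun_half c1 (u' (eIdx i))
      have h2 := condFlipFun_half c1 (u' (oIdx i))
      rw [Fin.lt_def]
      show (condFlipFun c1 (u' (eIdx i))).1 < (condFlipFun c1 (u' (oIdx i))).1
      omega
    · have heq : (u' (eIdx i)).1 / 2 = (u' (oIdx i)).1 / 2 := le_antisymm (hq i) h
      set j : Fin n := ⟨(u' (eIdx i)).1 / 2, by have := (u' (eIdx i)).2; omega⟩ with hj
      have hja : (u' (eIdx i)).1 / 2 = j.1 := rfl
      have hjb : (u' (oIdx i)).1 / 2 = j.1 := by rw [← heq]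
      rcases halves_cases j hne hja hjb with ⟨ha, hb⟩ | ⟨ha, hb⟩
      · have hA : u'⁻¹ (eIdx j) = eIdx i := by rw [← ha, Equiv.Perm.inv_def, Equiv.symm_apply_apply]
        have hB : u'⁻¹ (oIdx j) = oIdx i := by rw [← hb, Equiv.Perm.inv_def, Equiv.symm_apply_apply]
        have hcf : c1 j.1 = false := by
          rw [hc1v, hA, hB]; simp [eIdx, oIdx]
        rw [ha, hb, condFlip_apply_e, condFlip_apply_o, hcf]
        simp only [if_false, Bool.false_eq_true]
        exact eIdx_lt_oIdx j
      · have hA : u'⁻¹ (oIdx j) = eIdx i := by rw [← ha, Equiv.Perm.inv_def, Equiv.symm_apply_apply]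
        have hB : u'⁻¹ (eIdx j) = oIdx i := by rw [← hb, Equiv.Perm.inv_def, Equiv.symm_apply_apply]
        have hcf : c1 j.1 = true := by
          rw [hc1v, hA, hB]; simp [eIdx, oIdx]
        rw [ha, hb, condFlip_apply_e, condFlip_apply_o, hcf]
        simp only [if_true]
        exact eIdx_lt_oIdx j
  · -- inverse condition
    have hvinv : (condFlip c1 * u')⁻¹ = u'⁻¹ * condFlip c1 := by
      rw [mul_inv_rev, condFlip_inv]
    show u'⁻¹ ((condFlip c1)⁻¹ (eIdx i)) < u'⁻¹ ((condFlip c1)⁻¹ (oIdx i))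
    rw [condFlip_inv, condFlip_apply_e, condFlip_apply_o, hc1v]
    have hne : u'⁻¹ (eIdx i) ≠ u'⁻¹ (oIdx i) := by
      intro h
      have := u'⁻¹.injective h
      have : (eIdx i).1 = (oIdx i).1 := congrArg Fin.val this
      simp [eIdx, oIdx] at this
    have hne' : (u'⁻¹ (eIdx i)).1 ≠ (u'⁻¹ (oIdx i)).1 := fun h => hne (Fin.ext h)
    by_cases h : (u'⁻¹ (oIdx i)).1 < (u'⁻¹ (eIdx i)).1
    · simp only [decide_eq_true h, if_true, Fin.lt_def]; omega
    · have hd : (decide ((u'⁻¹ (oIdx i)).1 < (u'⁻¹ (eIdx i)).1)) = false := by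
        simpa using h
      simp only [hd, Bool.false_eq_true, if_false, Fin.lt_def]; omega

end Stmt6Aux

namespace Stmt6Aux

variable {n : ℕ}

lemma eIdx_half (i : Fin n) : (eIdx i).1 / 2 = i.1 := by
  show 2 * i.1 / 2 = i.1; omega

lemma oIdx_half (i : Fin n) : (oIdx i).1 / 2 = i.1 := by
  show (2 * i.1 + 1) / 2 = i.1; omega

lemma eq_of_half (a : Fin (2 * n)) (j : Fin n) (h : a.1 / 2 = j.1) :
    a = eIdx j ∨ a = oIdx j := by
  have h2 := a.2
  rcases Nat.even_or_odd a.1 with ⟨m, hm⟩ | ⟨m, hm⟩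
  · left; apply Fin.ext; show a.1 = 2 * j.1; omega
  · right; apply Fin.ext; show a.1 = 2 * j.1 + 1; omega

lemma biReduced_eq {v w : Equiv.Perm (Fin (2 * n))} (hv : BiReduced v) (hw : BiReduced w)
    {h₁ h₂ : Equiv.Perm (Fin (2 * n))} (m₁ : h₁ ∈ pairSubgroup n) (m₂ : h₂ ∈ pairSubgroup n)
    (he : w = h₁ * v * h₂) : w = v := by
  have hv' : ∀ i : Fin n, v (eIdx i) < v (oIdx i) ∧ v⁻¹ (eIdx i) < v⁻¹ (oIdx i) := hv
  have hw' : ∀ i : Fin n, w (eIdx i) < w (oIdx i) ∧ w⁻¹ (eIdx i) < w⁻¹ (oIdx i) := hw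
  have m₁' : ∀ k, (h₁ k).1 / 2 = k.1 / 2 := m₁
  have m₂' : ∀ k, (h₂ k).1 / 2 = k.1 / 2 := m₂
  have hpair : ∀ i : Fin n,
      (w (eIdx i)).1 / 2 = (v (eIdx i)).1 / 2 ∧ (w (oIdx i)).1 / 2 = (v (oIdx i)).1 / 2 := by
    intro i
    have ha : (h₂ (eIdx i)).1 / 2 = i.1 := by rw [m₂' (eIdx i), eIdx_half]
    have hb : (h₂ (oIdx i)).1 / 2 = i.1 := by rw [m₂' (oIdx i), oIdx_half]
    have hne : h₂ (eIdx i) ≠ h₂ (oIdx i) := by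
      intro h
      have h' := congrArg Fin.val (h₂.injective h)
      simp [eIdx, oIdx] at h'
    have e1 : w (eIdx i) = h₁ (v (h₂ (eIdx i))) := by rw [he]; rfl
    have e2 : w (oIdx i) = h₁ (v (h₂ (oIdx i))) := by rw [he]; rfl
    rcases halves_cases i hne ha hb with ⟨h1, h2'⟩ | ⟨h1, h2'⟩
    · rw [e1, e2, h1, h2', m₁' (v (eIdx i)), m₁' (v (oIdx i))]
      exact ⟨rfl, rfl⟩
    · rw [e1, e2, h1, h2', m₁' (v (oIdx i)), m₁' (v (eIdx i))]
      have l1 : (v (eIdx i)).1 < (v (oIdx i)).1 := (hv' i).1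
      have l2 : (w (eIdx i)).1 < (w (oIdx i)).1 := (hw' i).1
      rw [e1, e2, h1, h2'] at l2
      have l3 := m₁' (v (oIdx i)); have l4 := m₁' (v (eIdx i))
      constructor <;> omega
  have hhalf : ∀ k, (w k).1 / 2 = (v k).1 / 2 := by
    intro k
    obtain ⟨i, rfl | rfl⟩ := eq_eIdx_or_oIdx k
    exacts [(hpair i).1, (hpair i).2]
  have hkey : ∀ j : Fin n, w⁻¹ (eIdx j) = v⁻¹ (eIdx j) ∧ w⁻¹ (oIdx j) = v⁻¹ (oIdx j) := by
    intro j
    have hAB : v⁻¹ (eIdx j) < v⁻¹ (oIdx j) := (hv' j).2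
    have hCD : w⁻¹ (eIdx j) < w⁻¹ (oIdx j) := (hw' j).2
    have hwA : w (v⁻¹ (eIdx j)) = eIdx j ∨ w (v⁻¹ (eIdx j)) = oIdx j := by
      apply eq_of_half
      rw [hhalf, Equiv.Perm.inv_def, Equiv.apply_symm_apply, eIdx_half]
    have hwB : w (v⁻¹ (oIdx j)) = eIdx j ∨ w (v⁻¹ (oIdx j)) = oIdx j := by
      apply eq_of_half
      rw [hhalf, Equiv.Perm.inv_def, Equiv.apply_symm_apply, oIdx_half]
    have hAC : v⁻¹ (eIdx j) = w⁻¹ (eIdx j) ∨ v⁻¹ (eIdx j) = w⁻¹ (oIdx j) := by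
      rcases hwA with h | h <;> [left; right] <;> exact Equiv.Perm.eq_inv_iff_eq.mpr h
    have hBC : v⁻¹ (oIdx j) = w⁻¹ (eIdx j) ∨ v⁻¹ (oIdx j) = w⁻¹ (oIdx j) := by
      rcases hwB with h | h <;> [left; right] <;> exact Equiv.Perm.eq_inv_iff_eq.mpr h
    rcases hAC with h1 | h1 <;> rcases hBC with h2 | h2
    · exact absurd (h1.trans h2.symm) (ne_of_lt hAB)
    · exact ⟨h1.symm, h2.symm⟩
    · rw [← h2, ← h1] at hCD
      exact absurd hAB (lt_asymm hCD)
    · exact absurd (h1.trans h2.symm) (ne_of_lt hAB)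
  have hinv : w⁻¹ = v⁻¹ := by
    apply Equiv.ext
    intro m
    obtain ⟨j, rfl | rfl⟩ := eq_eIdx_or_oIdx m
    exacts [(hkey j).1, (hkey j).2]
  exact inv_injective hinv

end Stmt6Aux

/-- Every double coset `HuH` contains a unique bi-`H`-reduced element. -/
theorem stmt6 (n : ℕ) (u : Equiv.Perm (Fin (2 * n))) :
    ∃! v : Equiv.Perm (Fin (2 * n)), InPairDoubleCoset u v ∧ BiReduced v := by
  obtain ⟨v, hc, hb⟩ := Stmt6Aux.exists_biReduced u
  refine ⟨v, ⟨hc, hb⟩, ?_⟩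
  rintro w ⟨⟨a, ham, b, hbm, hw⟩, hbw⟩
  obtain ⟨a', ham', b', hbm', hv⟩ := hc
  have huw : w = (a * a'⁻¹) * v * (b'⁻¹ * b) := by
    rw [hw, hv]; group
  exact Stmt6Aux.biReduced_eq hb hbw (mul_mem ham (inv_mem ham'))
    (mul_mem (inv_mem hbm') hbm) huw
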